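/- For any two vertices i and j of the infinite distance graph D(1,t) with t ≥ 2, writing |i - j| = q·t + r where 0 ≤ r < t, the graph distance satisfies d(i,j) = min(q + r, q + 1 + t - r). -/

import Mathlib

/-- The infinite distance graph on `ℤ` with distance set `D`: distinct integers
`i, j` are adjacent iff `|i - j| ∈ D`. -/
def distGraph (D : Set ℤ) : SimpleGraph ℤ where
  Adj i j := i ≠ j ∧ |i - j| ∈ D
  symm := by
    constructor
    intro i j h
    exact ⟨h.1.symm, by rw [abs_sub_comm]; exact h.2⟩
  loopless := by
    constructor
    intro i h
    exact h.1 rfl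

private lemma signCases (z : ℤ) (h : z ≠ 0) : z.sign = 1 ∨ z.sign = -1 := by
  rcases lt_or_gt_of_ne h with h | h
  · exact Or.inr (Int.sign_eq_neg_one_iff_neg.mpr h)
  · exact Or.inl (Int.sign_eq_one_iff_pos.mpr h)

private lemma step1 (z : ℤ) (h : z ≠ 0) : |z - z.sign| = |z| - 1 := by
  rcases lt_or_gt_of_ne h with h | h
  · rw [Int.sign_eq_neg_one_iff_neg.mpr h, abs_of_neg h, abs_of_nonpos (by omega)]
    ring
  · rw [Int.sign_eq_one_iff_pos.mpr h, abs_of_pos h, abs_of_nonneg (by omega)]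

private lemma ubwalk (t : ℤ) (ht : 2 ≤ t) : ∀ n : ℕ, ∀ i j y : ℤ,
    |i - j - y * t| + |y| ≤ (n : ℤ) →
    ∃ p : (distGraph {1, t}).Walk i j, (p.length : ℤ) ≤ (n : ℤ) := by
  intro n
  induction n with
  | zero =>
    intro i j y h
    have h1 : |i - j - y * t| = 0 ∧ |y| = 0 := by
      constructor <;>
        · have := abs_nonneg (i - j - y * t); have := abs_nonneg y; omega
    have hy : y = 0 := abs_eq_zero.mp h1.2
    have : i = j := by have := abs_eq_zero.mp h1.1; subst hy; omega
    subst this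
    exact ⟨SimpleGraph.Walk.nil, by simp⟩
  | succ n ih =>
    intro i j y h
    by_cases hy : y = 0
    · subst hy
      by_cases hijeq : i = j
      · subst hijeq
        refine ⟨SimpleGraph.Walk.nil, ?_⟩
        simp only [SimpleGraph.Walk.length_nil, Nat.cast_zero]
        positivity
      · have hz : i - j ≠ 0 := sub_ne_zero.mpr hijeq
        set i' := i - (i - j).sign with hi'
        have hadj : (distGraph {1, t}).Adj i i' := by
          refine ⟨?_, ?_⟩
          · intro hcon
            have : (i - j).sign = 0 := by omega
            exact hz (Int.sign_eq_zero_iff_zero.mp this)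
          · have : |i - i'| = 1 := by
              rw [hi']
              rcases signCases _ hz with h1 | h1 <;> rw [h1] <;> simp
            rw [this]; left; rfl
        have hrec : |i' - j - 0 * t| + |(0 : ℤ)| ≤ (n : ℤ) := by
          have he : i' - j = (i - j) - (i - j).sign := by rw [hi']; ring
          simp only [zero_mul, sub_zero, abs_zero, add_zero] at h ⊢
          rw [he, step1 _ hz]
          push_cast at h ⊢
          omega
        obtain ⟨p, hp⟩ := ih i' j 0 hrec
        refine ⟨SimpleGraph.Walk.cons hadj p, ?_⟩
        simp only [SimpleGraph.Walk.length_cons]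
        push_cast at hp ⊢
        omega
    · set i' := i - y.sign * t with hi'
      have hst : y.sign = 1 ∨ y.sign = -1 := signCases _ hy
      have hadj : (distGraph {1, t}).Adj i i' := by
        refine ⟨?_, ?_⟩
        · intro hcon
          have : y.sign * t = 0 := by omega
          rcases hst with h1 | h1 <;> rw [h1] at this <;> omega
        · have : |i - i'| = t := by
            rw [hi']
            rcases hst with h1 | h1 <;> rw [h1] <;> simp <;> omega
          rw [this]; right; rfl
      have hrec : |i' - j - (y - y.sign) * t| + |y - y.sign| ≤ (n : ℤ) := by
        have h1 : i' - j - (y - y.sign) * t = i - j - y * t := by rw [hi']; ring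
        rw [h1, step1 _ hy]
        push_cast at h ⊢
        omega
      obtain ⟨p, hp⟩ := ih i' j (y - y.sign) hrec
      refine ⟨SimpleGraph.Walk.cons hadj p, ?_⟩
      simp only [SimpleGraph.Walk.length_cons]
      push_cast at hp ⊢
      omega

private lemma lbwalk (t : ℤ) (ht : 2 ≤ t) : ∀ {i j : ℤ} (p : (distGraph {1, t}).Walk i j),
    ∃ y : ℤ, |i - j - y * t| + |y| ≤ (p.length : ℤ) := by
  intro i j p
  induction p with
  | nil => exact ⟨0, by simp⟩
  | @cons a b c hadj p ih =>
    obtain ⟨y, hy⟩ := ih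
    obtain ⟨hne, hab⟩ := id hadj
    have hcases : a - b = 1 ∨ a - b = -1 ∨ a - b = t ∨ a - b = -t := by
      simp only [Set.mem_insert_iff, Set.mem_singleton_iff] at hab
      rcases hab with h1 | h1 <;>
        rcases abs_eq (by omega : (0:ℤ) ≤ _) |>.mp h1 with h2 | h2 <;> omega
    rcases hcases with h1 | h1 | h1 | h1
    · refine ⟨y, ?_⟩
      have hd : |a - c - y * t| ≤ |b - c - y * t| + 1 := by
        have he : a - c - y * t = (b - c - y * t) + 1 := by omega
        rw [he]
        calc |(b - c - y * t) + 1| ≤ |b - c - y * t| + |(1:ℤ)| := abs_add_le _ _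
          _ = |b - c - y * t| + 1 := by simp
      simp only [SimpleGraph.Walk.length_cons]
      push_cast
      omega
    · refine ⟨y, ?_⟩
      have hd : |a - c - y * t| ≤ |b - c - y * t| + 1 := by
        have he : a - c - y * t = (b - c - y * t) + (-1) := by omega
        rw [he]
        calc |(b - c - y * t) + (-1)| ≤ |b - c - y * t| + |(-1:ℤ)| := abs_add_le _ _
          _ = |b - c - y * t| + 1 := by simp
      simp only [SimpleGraph.Walk.length_cons]
      push_cast
      omega
    · refine ⟨y + 1, ?_⟩
      have he : a - c - (y + 1) * t = b - c - y * t := by rw [← h1]; ring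
      have h2 : |y + 1| ≤ |y| + 1 := by
        calc |y + 1| ≤ |y| + |(1:ℤ)| := abs_add_le _ _
          _ = |y| + 1 := by simp
      simp only [SimpleGraph.Walk.length_cons]
      push_cast
      rw [he]
      omega
    · refine ⟨y - 1, ?_⟩
      have he : a - c - (y - 1) * t = b - c - y * t := by
        have : a = b - t := by omega
        rw [this]; ring
      have h2 : |y - 1| ≤ |y| + 1 := by
        calc |y - 1| ≤ |y| + |(1:ℤ)| := abs_sub _ _
          _ = |y| + 1 := by simp
      simp only [SimpleGraph.Walk.length_cons]
      push_cast
      rw [he]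
      omega

private lemma arith (t q r : ℤ) (ht : 2 ≤ t) (hq : 0 ≤ q) (hr0 : 0 ≤ r) (hrt : r < t)
    (y : ℤ) : min (q + r) (q + 1 + t - r) ≤ |q * t + r - y * t| + |y| := by
  rcases le_or_gt y q with h | h
  · have habs : |q * t + r - y * t| = q * t + r - y * t := by
      refine abs_of_nonneg ?_
      nlinarith [mul_nonneg (sub_nonneg.2 h) (by linarith : (0:ℤ) ≤ t)]
    rcases le_or_gt 0 y with hy | hy
    · rw [habs, abs_of_nonneg hy]
      calc min (q + r) (q + 1 + t - r) ≤ q + r := min_le_left _ _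
        _ ≤ q * t + r - y * t + y := by
            nlinarith [mul_nonneg (sub_nonneg.2 h) (by linarith : (0:ℤ) ≤ t - 1)]
    · rw [habs, abs_of_neg hy]
      calc min (q + r) (q + 1 + t - r) ≤ q + r := min_le_left _ _
        _ ≤ q * t + r - y * t + -y := by
            nlinarith [mul_nonneg hq (by linarith : (0:ℤ) ≤ t - 1),
              mul_nonneg (by linarith : (0:ℤ) ≤ -y) (by linarith : (0:ℤ) ≤ t + 1)]
  · have hy1 : q + 1 ≤ y := h
    have habs : |q * t + r - y * t| = y * t - q * t - r := by
      have hnp : q * t + r - y * t ≤ 0 := by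
        nlinarith [mul_nonneg (by linarith : (0:ℤ) ≤ y - q - 1) (by linarith : (0:ℤ) ≤ t)]
      rw [abs_of_nonpos hnp]
      ring
    rw [habs, abs_of_pos (by linarith : 0 < y)]
    calc min (q + r) (q + 1 + t - r) ≤ q + 1 + t - r := min_le_right _ _
      _ ≤ y * t - q * t - r + y := by
          nlinarith [mul_nonneg (by linarith : (0:ℤ) ≤ y - q - 1) (by linarith : (0:ℤ) ≤ t)]

/-- In `D(1,t)` with `t ≥ 2`, if `|i - j| = q·t + r` with `0 ≤ r < t` (and `q ≥ 0`),
then `d(i,j) = min (q + r) (q + 1 + t - r)`. -/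
theorem distGraph_one_t_dist (t : ℤ) (ht : 2 ≤ t) (i j q r : ℤ)
    (hq : 0 ≤ q) (hr0 : 0 ≤ r) (hrt : r < t) (hij : |i - j| = q * t + r) :
    ((distGraph {1, t}).dist i j : ℤ) = min (q + r) (q + 1 + t - r) := by
  have hqt : (0:ℤ) ≤ q * t := mul_nonneg hq (by omega)
  have hsign : i - j = q * t + r ∨ i - j = -(q * t + r) := by
    rcases abs_cases (i - j) with ⟨h1, _⟩ | ⟨h1, _⟩ <;> omega
  -- upper bounds
  have hub1 : ((distGraph {1, t}).dist i j : ℤ) ≤ q + r := by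
    obtain ⟨n, hn⟩ : ∃ n : ℕ, (n : ℤ) = q + r := ⟨(q + r).toNat, by omega⟩
    have hy : ∃ y : ℤ, |i - j - y * t| + |y| ≤ (n : ℤ) := by
      rcases hsign with h1 | h1
      · refine ⟨q, ?_⟩
        rw [h1]
        have he : q * t + r - q * t = r := by ring
        rw [he, abs_of_nonneg hr0, abs_of_nonneg hq]
        omega
      · refine ⟨-q, ?_⟩
        rw [h1]
        have he : -(q * t + r) - (-q) * t = -r := by ring
        rw [he, abs_neg, abs_of_nonneg hr0, abs_neg, abs_of_nonneg hq]
        omega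
    obtain ⟨y, hy⟩ := hy
    obtain ⟨p, hp⟩ := ubwalk t ht n i j y hy
    have := SimpleGraph.dist_le p
    push_cast at hp ⊢
    omega
  have hub2 : ((distGraph {1, t}).dist i j : ℤ) ≤ q + 1 + t - r := by
    obtain ⟨n, hn⟩ : ∃ n : ℕ, (n : ℤ) = q + 1 + t - r := ⟨(q + 1 + t - r).toNat, by omega⟩
    have hy : ∃ y : ℤ, |i - j - y * t| + |y| ≤ (n : ℤ) := by
      rcases hsign with h1 | h1
      · refine ⟨q + 1, ?_⟩
        rw [h1]
        have he : q * t + r - (q + 1) * t = r - t := by ring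
        rw [he, abs_of_neg (by omega), abs_of_nonneg (by omega)]
        omega
      · refine ⟨-(q + 1), ?_⟩
        rw [h1]
        have he : -(q * t + r) - (-(q + 1)) * t = t - r := by ring
        rw [he, abs_of_nonneg (by omega), abs_neg, abs_of_nonneg (by omega)]
        omega
    obtain ⟨y, hy⟩ := hy
    obtain ⟨p, hp⟩ := ubwalk t ht n i j y hy
    have := SimpleGraph.dist_le p
    push_cast at hp ⊢
    omega
  -- lower bound
  have hreach : (distGraph {1, t}).Reachable i j := by
    have hy : |i - j - 0 * t| + |(0:ℤ)| ≤ (((q * t + r).toNat : ℕ) : ℤ) := by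
      simp only [zero_mul, sub_zero, abs_zero, add_zero]
      rcases hsign with h1 | h1 <;> rw [h1]
      · rw [abs_of_nonneg (by omega)]; omega
      · rw [abs_neg, abs_of_nonneg (by omega)]; omega
    obtain ⟨p, _⟩ := ubwalk t ht _ i j 0 hy
    exact ⟨p⟩
  obtain ⟨p, hp⟩ := hreach.exists_walk_length_eq_dist
  obtain ⟨y, hy⟩ := lbwalk t ht p
  rw [hp] at hy
  have hlb : min (q + r) (q + 1 + t - r) ≤ ((distGraph {1, t}).dist i j : ℤ) := by
    rcases hsign with h1 | h1
    · rw [h1] at hy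
      exact le_trans (arith t q r ht hq hr0 hrt y) hy
    · rw [h1] at hy
      have he : -(q * t + r) - y * t = -(q * t + r - (-y) * t) := by ring
      rw [he, abs_neg] at hy
      have h2 := arith t q r ht hq hr0 hrt (-y)
      rw [abs_neg] at h2
      exact le_trans h2 hy
  omega
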